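/- Let A ∈ ℚ^{k×k}, v ∈ ℚ^k, and let s ∈ ℚ^{k+1} be a vector with all entries strictly positive and summing to 1. Then there exist a (k+1)×(k+1) column-stochastic rational matrix M with all entries strictly positive and a vector μ ∈ ℚ^{k+1} with nonnegative entries summing to 1 such that: for every set T ⊆ ℝ^k that is invariant under positive scaling (i.e. for all λ > 0 and all x ∈ ℝ^k, x ∈ T if and only if λx ∈ T) and for every n ≥ 0, we have M^n μ ∈ {s + Qx : x ∈ T} if and only if A^n v ∈ T, where Q is the (k+1)×k matrix whose top k×k block is the identity and whose last row is −1^⊤. -/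
import Mathlib

open Matrix Finset

/-- The `(k+1) × k` rational matrix whose top `k × k` block is the identity and whose
last row is `-1ᵀ`. -/
def Qmat (k : ℕ) : Matrix (Fin (k + 1)) (Fin k) ℚ :=
  Matrix.of fun i j => if (i : ℕ) = (j : ℕ) then 1 else if (i : ℕ) = k then -1 else 0

lemma Qmat_castSucc {k : ℕ} (j j' : Fin k) :
    Qmat k (Fin.castSucc j) j' = if j' = j then 1 else 0 := by
  have hk : (j : ℕ) ≠ k := Nat.ne_of_lt j.isLt
  simp only [Qmat, Matrix.of_apply, Fin.coe_castSucc]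
  by_cases h : j' = j
  · simp [h]
  · have h' : (j : ℕ) ≠ (j' : ℕ) := fun hh => h (Fin.ext hh.symm)
    simp [h, h', hk]

lemma Qmat_last {k : ℕ} (j : Fin k) : Qmat k (Fin.last k) j = -1 := by
  have h1 : ¬ (k = (j : ℕ)) := Nat.ne_of_gt j.isLt
  simp [Qmat, Fin.val_last, h1]

lemma Qmat_colsum {k : ℕ} (j : Fin k) : ∑ i, Qmat k i j = 0 := by
  rw [Fin.sum_univ_castSucc]
  simp [Qmat_castSucc, Qmat_last]

lemma Qmat_sum_mulVec {k : ℕ} (x : Fin k → ℚ) : ∑ i, (Qmat k).mulVec x i = 0 := by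
  simp only [Matrix.mulVec, dotProduct]
  rw [Finset.sum_comm]
  simp [← Finset.sum_mul, Qmat_colsum]

lemma Qmat_mulVec_castSucc {k : ℕ} (x : Fin k → ℚ) (j : Fin k) :
    (Qmat k).mulVec x (Fin.castSucc j) = x j := by
  simp [Matrix.mulVec, dotProduct, Qmat_castSucc, ite_mul]

lemma QmatR_mulVec_castSucc {k : ℕ} (x : Fin k → ℝ) (j : Fin k) :
    ((Qmat k).map (fun q => (q : ℝ))).mulVec x (Fin.castSucc j) = x j := by
  simp [Matrix.mulVec, dotProduct, Matrix.map_apply, Qmat_castSucc,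
    apply_ite (fun q : ℚ => (q : ℝ)), ite_mul]

set_option maxHeartbeats 1000000 in
theorem stmt15 {k : ℕ} (A : Matrix (Fin k) (Fin k) ℚ) (v : Fin k → ℚ)
    (s : Fin (k + 1) → ℚ) (hspos : ∀ i, 0 < s i) (hssum : ∑ i, s i = 1) :
    ∃ (M : Matrix (Fin (k + 1)) (Fin (k + 1)) ℚ) (μ : Fin (k + 1) → ℚ),
      (∀ i j, 0 < M i j) ∧ (∀ j, ∑ i, M i j = 1) ∧
      (∀ i, 0 ≤ μ i) ∧ (∑ i, μ i = 1) ∧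
      ∀ T : Set (Fin k → ℝ),
        (∀ lam : ℝ, 0 < lam → ∀ x : Fin k → ℝ, x ∈ T ↔ lam • x ∈ T) →
        ∀ n : ℕ,
          ((fun i => (((M ^ n).mulVec μ) i : ℝ)) ∈
              {y : Fin (k + 1) → ℝ | ∃ x ∈ T,
                y = (fun i => (s i : ℝ)) +
                  ((Qmat k).map (fun q => (q : ℝ))).mulVec x})
            ↔ (fun i => (((A ^ n).mulVec v) i : ℝ)) ∈ T := by
  classical
  -- a positive lower bound for s
  obtain ⟨m, hm_le, hm_pos⟩ : ∃ m : ℚ, (∀ i, m ≤ s i) ∧ 0 < m := by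
    refine ⟨Finset.univ.inf' Finset.univ_nonempty s,
      fun i => Finset.inf'_le _ (Finset.mem_univ i), ?_⟩
    exact (Finset.lt_inf'_iff _).2 fun i _ => hspos i
  -- the "inverse" matrix P'
  set P' : Matrix (Fin k) (Fin (k+1)) ℚ :=
    Matrix.of fun j i => (if i = Fin.castSucc j then 1 else 0) - s (Fin.castSucc j) with hP'
  have hP'mul : ∀ y : Fin (k+1) → ℚ, P'.mulVec y =
      fun j => y (Fin.castSucc j) - s (Fin.castSucc j) * ∑ i, y i := by
    intro y; funext j
    simp [hP', Matrix.mulVec, dotProduct, sub_mul, Finset.sum_sub_distrib, ite_mul,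
      Finset.mul_sum]
  have hP's : P'.mulVec s = 0 := by
    rw [hP'mul]; funext j; simp [hssum]
  have hP'Q : ∀ x : Fin k → ℚ, P'.mulVec ((Qmat k).mulVec x) = x := by
    intro x; rw [hP'mul]; funext j
    simp [Qmat_mulVec_castSucc, Qmat_sum_mulVec]
  -- the matrix D and scaling factor γ
  set D : Matrix (Fin (k+1)) (Fin (k+1)) ℚ := Qmat k * A * P' with hD
  set Sd : ℚ := ∑ i, ∑ j, |D i j| with hSd
  have hSd0 : 0 ≤ Sd := Finset.sum_nonneg fun _ _ => Finset.sum_nonneg fun _ _ => abs_nonneg _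
  set γ : ℚ := m / (1 + Sd) with hγ
  have hγpos : 0 < γ := div_pos hm_pos (by linarith)
  have hγmul : γ * (1 + Sd) = m := div_mul_cancel₀ m (by positivity)
  have hDle : ∀ i j, |D i j| ≤ Sd := by
    intro i j
    calc |D i j| ≤ ∑ j', |D i j'| :=
          Finset.single_le_sum (f := fun j' => |D i j'|)
            (fun j' _ => abs_nonneg _) (Finset.mem_univ j)
      _ ≤ Sd := Finset.single_le_sum (f := fun i => ∑ j', |D i j'|)
          (fun i' _ => Finset.sum_nonneg fun _ _ => abs_nonneg _) (Finset.mem_univ i)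
  have hDcol : ∀ j, ∑ i, D i j = 0 := by
    intro j
    have : D = Qmat k * (A * P') := by rw [hD, Matrix.mul_assoc]
    rw [this]
    simp only [Matrix.mul_apply]
    rw [Finset.sum_comm]
    simp [← Finset.sum_mul, Qmat_colsum]
  -- the vector w and scaling factor ε
  set w : Fin (k+1) → ℚ := (Qmat k).mulVec v with hw
  set Sw : ℚ := ∑ i, |w i| with hSw
  have hSw0 : 0 ≤ Sw := Finset.sum_nonneg fun _ _ => abs_nonneg _
  set ε : ℚ := m / (1 + Sw) with hε
  have hεpos : 0 < ε := div_pos hm_pos (by linarith)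
  have hεmul : ε * (1 + Sw) = m := div_mul_cancel₀ m (by positivity)
  have hwle : ∀ i, |w i| ≤ Sw := fun i =>
    Finset.single_le_sum (f := fun i' => |w i'|) (fun i' _ => abs_nonneg _) (Finset.mem_univ i)
  -- define M and μ
  set M : Matrix (Fin (k+1)) (Fin (k+1)) ℚ := Matrix.of (fun i _ => s i) + γ • D with hM
  set μ : Fin (k+1) → ℚ := s + ε • w with hμ
  have hMentry : ∀ i j, M i j = s i + γ * D i j := by
    intro i j; rw [hM]; simp
  -- key iteration step
  have hstep : ∀ (c : ℚ) (x : Fin k → ℚ),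
      M.mulVec (s + c • (Qmat k).mulVec x) = s + (γ * c) • (Qmat k).mulVec (A.mulVec x) := by
    intro c x
    have hsum1 : ∑ i, (s + c • (Qmat k).mulVec x) i = 1 := by
      simp [Finset.sum_add_distrib, hssum, ← Finset.mul_sum, Qmat_sum_mulVec]
    have h1 : (Matrix.of (fun i (_ : Fin (k+1)) => s i)).mulVec (s + c • (Qmat k).mulVec x)
        = s := by
      funext i
      simp only [Matrix.mulVec, dotProduct, Matrix.of_apply, ← Finset.mul_sum]
      rw [hsum1, mul_one]
    have h2 : D.mulVec (s + c • (Qmat k).mulVec x) = c • (Qmat k).mulVec (A.mulVec x) := by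
      have hPy : P'.mulVec (s + c • (Qmat k).mulVec x) = c • x := by
        rw [Matrix.mulVec_add, Matrix.mulVec_smul, hP's, hP'Q]; simp
      calc D.mulVec (s + c • (Qmat k).mulVec x)
          = (Qmat k * A).mulVec (P'.mulVec (s + c • (Qmat k).mulVec x)) := by
            rw [Matrix.mulVec_mulVec, hD]
        _ = (Qmat k * A).mulVec (c • x) := by rw [hPy]
        _ = c • (Qmat k).mulVec (A.mulVec x) := by
            rw [Matrix.mulVec_smul, Matrix.mulVec_mulVec]
    rw [hM, Matrix.add_mulVec, Matrix.smul_mulVec, h1, h2, smul_smul]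
  -- the explicit formula for M^n μ
  have hiter : ∀ n : ℕ,
      (M ^ n).mulVec μ = s + (ε * γ ^ n) • (Qmat k).mulVec ((A ^ n).mulVec v) := by
    intro n
    induction n with
    | zero => simp [hμ, hw]
    | succ n ih =>
      have : (M ^ (n+1)).mulVec μ = M.mulVec ((M ^ n).mulVec μ) := by
        rw [Matrix.mulVec_mulVec, ← pow_succ']
      rw [this, ih, hstep]
      have hA : A.mulVec ((A ^ n).mulVec v) = (A ^ (n+1)).mulVec v := by
        rw [Matrix.mulVec_mulVec, ← pow_succ']
      rw [hA]
      ring_nf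
  refine ⟨M, μ, ?_, ?_, ?_, ?_, ?_⟩
  · -- positivity of M
    intro i j
    have h1 : -Sd ≤ D i j := (abs_le.1 (hDle i j)).1
    have h2 : γ * (-Sd) ≤ γ * D i j := mul_le_mul_of_nonneg_left h1 hγpos.le
    have := hm_le i
    rw [hMentry]
    nlinarith
  · -- column sums of M
    intro j
    simp only [hMentry]
    rw [Finset.sum_add_distrib, hssum, ← Finset.mul_sum, hDcol, mul_zero, add_zero]
  · -- nonnegativity of μ
    intro i
    have h1 : -Sw ≤ w i := (abs_le.1 (hwle i)).1
    have h2 : ε * (-Sw) ≤ ε * w i := mul_le_mul_of_nonneg_left h1 hεpos.le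
    have := hm_le i
    simp only [hμ, Pi.add_apply, Pi.smul_apply, smul_eq_mul]
    nlinarith
  · -- sum of μ
    simp only [hμ, Pi.add_apply, Pi.smul_apply, smul_eq_mul]
    rw [Finset.sum_add_distrib, hssum, ← Finset.mul_sum, hw, Qmat_sum_mulVec, mul_zero, add_zero]
  · -- the main equivalence
    intro T hT n
    set c : ℚ := ε * γ ^ n with hc
    have hcpos : 0 < c := mul_pos hεpos (pow_pos hγpos n)
    have hcRpos : (0:ℝ) < (c:ℝ) := by exact_mod_cast hcpos
    set u : Fin k → ℚ := (A ^ n).mulVec v with hu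
    set uR : Fin k → ℝ := fun j => (u j : ℝ) with huR
    have hcast : (fun i => (((M ^ n).mulVec μ) i : ℝ)) =
        (fun i => (s i : ℝ)) + ((Qmat k).map (fun q => (q : ℝ))).mulVec ((c:ℝ) • uR) := by
      funext i
      rw [hiter n, ← hc, ← hu]
      simp only [Pi.add_apply, Pi.smul_apply, smul_eq_mul, Matrix.mulVec, dotProduct,
        Matrix.map_apply, huR, Finset.mul_sum]
      push_cast
      congr 1
      refine Finset.sum_congr rfl fun j _ => by ring
    constructor
    · rintro ⟨x, hxT, hxeq⟩
      rw [hcast] at hxeq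
      have hxeq' : ((Qmat k).map (fun q => (q : ℝ))).mulVec ((c:ℝ) • uR) =
          ((Qmat k).map (fun q => (q : ℝ))).mulVec x := by
        have := hxeq
        funext i
        have h := congrFun this i
        simpa using h
      have hx : x = (c:ℝ) • uR := by
        funext j
        have h1 := congrFun hxeq' (Fin.castSucc j)
        rw [QmatR_mulVec_castSucc, QmatR_mulVec_castSucc] at h1
        exact h1.symm
      rw [hx] at hxT
      exact (hT (c:ℝ) hcRpos uR).2 hxT
    · intro hvT
      exact ⟨(c:ℝ) • uR, (hT (c:ℝ) hcRpos uR).1 hvT, hcast⟩
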